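/- If |λ| < 1 and |β| < 1, then every trajectory of the map f converges to a fixed point of f, i.e., for every trajectory (x_n, s_n) there exists s* ∈ [−1,1] such that (x_n, s_n) → (a·s*/(1−λ), s*) as n → ∞. -/

import Mathlib

open Filter Topology

/-- The clipping function Φ. -/
noncomputable def Phi (t : ℝ) : ℝ := if t < -1 then -1 else if t ≤ 1 then t else 1

/-- The map f(x,s) = (λx + a·s, Φ(s + x' − x)). -/
noncomputable def f (lam a : ℝ) (p : ℝ × ℝ) : ℝ × ℝ :=
  (lam * p.1 + a * p.2, Phi (p.2 + (lam * p.1 + a * p.2) - p.1))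

/-- Membership in the strip L = {(x,s) : |s| ≤ 1}. -/
def inL (p : ℝ × ℝ) : Prop := |p.2| ≤ 1

/-- A trajectory of the map f, staying in the strip L. -/
def IsTraj (lam a : ℝ) (z : ℕ → ℝ × ℝ) : Prop :=
  (∀ n, inL (z n)) ∧ ∀ n, z (n + 1) = f lam a (z n)

/-- The set of fixed points of f in the strip L. -/
def fixedSet (lam a : ℝ) : Set (ℝ × ℝ) := {p | inL p ∧ f lam a p = p}

/-- Lyapunov stability of a fixed point. -/
def IsStableFixed (lam a : ℝ) (P : ℝ × ℝ) : Prop :=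
  ∀ ε > 0, ∃ δ > 0, ∀ z : ℕ → ℝ × ℝ, IsTraj lam a z → dist (z 0) P < δ →
    ∀ n, dist (z n) P < ε

/-- Semi-stability of a fixed point. -/
def IsSemiStable (lam a : ℝ) (P : ℝ × ℝ) : Prop :=
  ∃ U₁ U₂ : Set (ℝ × ℝ), IsOpen U₁ ∧ IsOpen U₂ ∧
    U₁ ⊆ {p | |p.2| < 1} ∧ U₂ ⊆ {p | |p.2| < 1} ∧
    P ∈ frontier U₁ ∧ P ∈ frontier U₂ ∧
    (∀ ε > 0, ∃ δ > 0, ∀ z : ℕ → ℝ × ℝ, IsTraj lam a z → z 0 ∈ U₁ →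
      dist (z 0) P < δ → ∀ n, dist (z n) P < ε) ∧
    (∃ ε₀ > 0, ∀ z : ℕ → ℝ × ℝ, IsTraj lam a z → z 0 ∈ U₂ →
      ∃ n, ε₀ ≤ dist (z n) P)

/-- Stability of a set (e.g. a periodic orbit) for the dynamics of f. -/
def IsStableSet (lam a : ℝ) (O : Set (ℝ × ℝ)) : Prop :=
  ∀ ε > 0, ∃ δ > 0, ∀ z : ℕ → ℝ × ℝ, IsTraj lam a z →
    Metric.infDist (z 0) O < δ → ∀ n, Metric.infDist (z n) O < ε

/-- O is a periodic orbit of f. -/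
def IsPeriodicOrbit (lam a : ℝ) (O : Set (ℝ × ℝ)) : Prop :=
  ∃ P : ℝ × ℝ, ∃ m : ℕ, 1 ≤ m ∧ inL P ∧ (f lam a)^[m] P = P ∧
    O = {q | ∃ i < m, (f lam a)^[i] P = q}

/-- P is a periodic point of minimal period k. -/
def HasMinPeriod (lam a : ℝ) (P : ℝ × ℝ) (k : ℕ) : Prop :=
  (f lam a)^[k] P = P ∧ ∀ j, 1 ≤ j → j < k → (f lam a)^[j] P ≠ P

-- auxiliary lemma
lemma phi_theta (s t : ℝ) (hs : |s| ≤ 1) :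
    ∃ θ ∈ Set.Icc (0:ℝ) 1, Phi (s + t) - s = θ * t := by
  rw [abs_le] at hs
  rcases lt_trichotomy t 0 with ht | ht | ht
  · have hb : t ≤ Phi (s + t) - s ∧ Phi (s + t) - s ≤ 0 := by
      unfold Phi; split_ifs <;> constructor <;> linarith
    refine ⟨(Phi (s + t) - s) / t, ⟨?_, ?_⟩, ?_⟩
    · exact div_nonneg_of_nonpos hb.2 ht.le
    · rw [div_le_one_iff]
      exact Or.inr (Or.inr ⟨ht, by linarith [hb.1]⟩)
    · rw [div_mul_cancel₀ _ ht.ne]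
  · refine ⟨0, ⟨le_refl _, zero_le_one⟩, ?_⟩
    subst ht
    unfold Phi; split_ifs <;> simp <;> linarith
  · have hb : 0 ≤ Phi (s + t) - s ∧ Phi (s + t) - s ≤ t := by
      unfold Phi; split_ifs <;> constructor <;> linarith
    refine ⟨(Phi (s + t) - s) / t, ⟨div_nonneg hb.1 ht.le, ?_⟩, ?_⟩
    · rw [div_le_one ht]; exact hb.2
    · rw [div_mul_cancel₀ _ ht.ne']

/-- If |λ| < 1 and |β| < 1, every trajectory converges to a fixed point. -/
theorem stmt2 (lam a : ℝ) (h1 : |lam| < 1) (h2 : |lam + a| < 1)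
    (z : ℕ → ℝ × ℝ) (hz : IsTraj lam a z) :
    ∃ s ∈ Set.Icc (-1 : ℝ) 1,
      Tendsto z atTop (𝓝 (a * s / (1 - lam), s)) := by
  obtain ⟨hL, hf⟩ := hz
  set x : ℕ → ℝ := fun n => (z n).1 with hxdef
  set s : ℕ → ℝ := fun n => (z n).2 with hsdef
  have hx : ∀ n, x (n + 1) = lam * x n + a * s n := by
    intro n
    show (z (n+1)).1 = _
    rw [hf n]; rfl
  have hs : ∀ n, s (n + 1) = Phi (s n + (x (n + 1) - x n)) := by
    intro n
    show (z (n+1)).2 = _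
    rw [hf n, hx n]
    show Phi ((z n).2 + (lam * (z n).1 + a * (z n).2) - (z n).1) = _
    ring_nf
    congr 1; simp only [hxdef, hsdef]; ring
  set ρ : ℝ := max |lam| |lam + a| with hρdef
  have hρ1 : ρ < 1 := max_lt h1 h2
  have hρ0 : 0 ≤ ρ := le_trans (abs_nonneg _) (le_max_left _ _)
  have hθ : ∀ n, ∃ θ ∈ Set.Icc (0:ℝ) 1,
      s (n + 1) - s n = θ * (x (n + 1) - x n) := by
    intro n
    obtain ⟨θ, hθ1, hθ2⟩ := phi_theta (s n) (x (n+1) - x n) (hL n)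
    exact ⟨θ, hθ1, by rw [← hθ2, hs n]⟩
  have key : ∀ n, |x (n + 2) - x (n + 1)| ≤ ρ * |x (n + 1) - x n| := by
    intro n
    obtain ⟨θ, ⟨hθ0, hθ1⟩, hθe⟩ := hθ n
    have e : x (n + 2) - x (n + 1)
        = ((1 - θ) * lam + θ * (lam + a)) * (x (n + 1) - x n) := by
      have h2' : x (n + 2) = lam * x (n + 1) + a * s (n + 1) := hx (n + 1)
      linear_combination h2' - hx n + a * hθe
    rw [e, abs_mul]
    gcongr
    calc |(1 - θ) * lam + θ * (lam + a)|
        ≤ |(1 - θ) * lam| + |θ * (lam + a)| := abs_add_le _ _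
      _ = (1 - θ) * |lam| + θ * |lam + a| := by
          rw [abs_mul, abs_mul, abs_of_nonneg (by linarith), abs_of_nonneg hθ0]
      _ ≤ (1 - θ) * ρ + θ * ρ := by
          gcongr
          · exact le_max_left _ _
          · exact le_max_right _ _
      _ = ρ := by ring
  set C : ℝ := |x 1 - x 0| with hC
  have geom : ∀ n, |x (n + 1) - x n| ≤ C * ρ ^ n := by
    intro n
    induction n with
    | zero => simp [hC]
    | succ k ih =>
        calc |x (k + 2) - x (k + 1)| ≤ ρ * |x (k + 1) - x k| := key k
          _ ≤ ρ * (C * ρ ^ k) := by gcongr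
          _ = C * ρ ^ (k + 1) := by ring
  have hcx : CauchySeq x := by
    apply cauchySeq_of_le_geometric ρ C hρ1
    intro n
    rw [Real.dist_eq, abs_sub_comm]
    exact geom n
  have hcs : CauchySeq s := by
    apply cauchySeq_of_le_geometric ρ C hρ1
    intro n
    rw [Real.dist_eq, abs_sub_comm]
    obtain ⟨θ, ⟨hθ0, hθ1⟩, hθe⟩ := hθ n
    calc |s (n + 1) - s n| = θ * |x (n + 1) - x n| := by
          rw [hθe, abs_mul, abs_of_nonneg hθ0]
      _ ≤ 1 * |x (n + 1) - x n| := by gcongr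
      _ ≤ C * ρ ^ n := by rw [one_mul]; exact geom n
  obtain ⟨xl, hxl⟩ := cauchySeq_tendsto_of_complete hcx
  obtain ⟨sl, hsl⟩ := cauchySeq_tendsto_of_complete hcs
  have hslI : sl ∈ Set.Icc (-1 : ℝ) 1 := by
    refine isClosed_Icc.mem_of_tendsto hsl (Eventually.of_forall fun n => ?_)
    exact abs_le.mp (hL n)
  have hxl' : Tendsto (fun n => x (n + 1)) atTop (𝓝 xl) :=
    hxl.comp (tendsto_add_atTop_nat 1)
  have hlim2 : Tendsto (fun n => lam * x n + a * s n) atTop (𝓝 (lam * xl + a * sl)) :=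
    ((hxl.const_mul lam).add (hsl.const_mul a))
  have heq : xl = lam * xl + a * sl := by
    refine tendsto_nhds_unique hxl' ?_
    exact hlim2.congr fun n => (hx n).symm
  have hne : (1 : ℝ) - lam ≠ 0 := by
    have := abs_lt.mp h1
    intro h; linarith
  have hxlval : xl = a * sl / (1 - lam) := by
    field_simp
    linarith
  refine ⟨sl, hslI, ?_⟩
  rw [← hxlval]
  have := hxl.prodMk_nhds hsl
  convert this using 1
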